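/- arXiv:2603.03760 — 2 statements merged into one kernel-verified Lean document; each statement's English description precedes it below -/
import Mathlib

section
/- Let f, g : ℝ → ℝ be functions that are Lipschitz on [−π, π] with Lipschitz constants ℓ_f and ℓ_g respectively. Let T be a finite nonempty set of points of [−π, π] and Δ ≥ 0 be such that every ω ∈ [−π, π] lies within distance Δ of some point of T, and suppose |f(t) − g(t)| ≤ ε for every t ∈ T, where ε ≥ 0. For each integer k set r_f(k) = (1/(2π))·∫_{−π}^{π} f(ω)·exp(i·ω·k) dω and r_g(k) = (1/(2π))·∫_{−π}^{π} g(ω)·exp(i·ω·k) dω. Then for every natural number K and every integer k with |k| ≤ K, |r_g(k) − r_f(k)| ≤ ε + (ℓ_f + ℓ_g)·Δ; in particular, if ε > 0 then, with C = 1 + (ℓ_f + ℓ_g)·Δ/ε, one has max over all integers k with |k| ≤ K of |r_g(k) − r_f(k)| ≤ C·ε. -/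
/-- Deterministic content of Theorem 1 (Steps 2–4): if two power spectral densities
`f`, `g` are Lipschitz on `[-π, π]` with constants `ℓf`, `ℓg`, are `ε`-close on a
finite nonempty `Δ`-net `T ⊆ [-π, π]`, then for every maximum lag `K` and every
integer `k` with `|k| ≤ K` the corresponding autocorrelations
`r_h(k) = (1/(2π))∫_{-π}^{π} h(ω) e^{iωk} dω` satisfy
`|r_g(k) - r_f(k)| ≤ ε + (ℓf + ℓg)·Δ`; in particular, when `ε > 0`, with
`C = 1 + (ℓf + ℓg)·Δ/ε` one has `|r_g(k) - r_f(k)| ≤ C·ε` for all `|k| ≤ K`. -/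
theorem acf_close_of_psd_close_on_grid (f g : ℝ → ℝ) (ℓf ℓg : ℝ)
    (hf : ∀ a ∈ Set.Icc (-Real.pi) Real.pi, ∀ b ∈ Set.Icc (-Real.pi) Real.pi,
      |f a - f b| ≤ ℓf * |a - b|)
    (hg : ∀ a ∈ Set.Icc (-Real.pi) Real.pi, ∀ b ∈ Set.Icc (-Real.pi) Real.pi,
      |g a - g b| ≤ ℓg * |a - b|)
    (T : Finset ℝ) (hTne : T.Nonempty) (hTsub : (T : Set ℝ) ⊆ Set.Icc (-Real.pi) Real.pi)
    (Δ : ℝ) (hΔ : 0 ≤ Δ)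
    (hcover : ∀ ω ∈ Set.Icc (-Real.pi) Real.pi, ∃ t ∈ T, |ω - t| ≤ Δ)
    (ε : ℝ) (hε : 0 ≤ ε)
    (hclose : ∀ t ∈ T, |f t - g t| ≤ ε)
    (rf rg : ℤ → ℂ)
    (hrf : ∀ k : ℤ, rf k =
      (1 / (2 * (Real.pi : ℂ))) *
        ∫ ω in (-Real.pi)..Real.pi, (f ω : ℂ) * Complex.exp (Complex.I * (ω : ℂ) * (k : ℂ)))
    (hrg : ∀ k : ℤ, rg k =
      (1 / (2 * (Real.pi : ℂ))) *
        ∫ ω in (-Real.pi)..Real.pi, (g ω : ℂ) * Complex.exp (Complex.I * (ω : ℂ) * (k : ℂ))) :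
    (∀ (K : ℕ) (k : ℤ), |k| ≤ (K : ℤ) →
        ‖rg k - rf k‖ ≤ ε + (ℓf + ℓg) * Δ) ∧
    (0 < ε → ∀ (K : ℕ) (k : ℤ), |k| ≤ (K : ℤ) →
        ‖rg k - rf k‖ ≤ (1 + (ℓf + ℓg) * Δ / ε) * ε) := by
  have hpi : (0:ℝ) < Real.pi := Real.pi_pos
  have hle : (-Real.pi) ≤ Real.pi := by linarith
  -- nonneg Lipschitz constants
  have hmem₁ : (-Real.pi) ∈ Set.Icc (-Real.pi) Real.pi := ⟨le_refl _, hle⟩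
  have hmem₂ : Real.pi ∈ Set.Icc (-Real.pi) Real.pi := ⟨hle, le_refl _⟩
  have hℓf : 0 ≤ ℓf := by
    have := hf _ hmem₁ _ hmem₂
    have h2 : |(-Real.pi) - Real.pi| = 2 * Real.pi := by
      rw [abs_of_nonpos (by linarith)]; ring
    rw [h2] at this
    nlinarith [abs_nonneg (f (-Real.pi) - f Real.pi)]
  have hℓg : 0 ≤ ℓg := by
    have := hg _ hmem₁ _ hmem₂
    have h2 : |(-Real.pi) - Real.pi| = 2 * Real.pi := by
      rw [abs_of_nonpos (by linarith)]; ring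
    rw [h2] at this
    nlinarith [abs_nonneg (g (-Real.pi) - g Real.pi)]
  set B : ℝ := ε + (ℓf + ℓg) * Δ with hB
  -- pointwise bound
  have key : ∀ ω ∈ Set.Icc (-Real.pi) Real.pi, |f ω - g ω| ≤ B := by
    intro ω hω
    obtain ⟨t, htT, htd⟩ := hcover ω hω
    have htmem := hTsub htT
    have h1 := hf ω hω t htmem
    have h2 := hg t htmem ω hω
    have h3 := hclose t htT
    have h1' : |f ω - f t| ≤ ℓf * Δ := h1.trans (by nlinarith [abs_nonneg (ω - t)])
    have h2' : |g t - g ω| ≤ ℓg * Δ := by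
      refine h2.trans ?_
      have : |t - ω| = |ω - t| := abs_sub_comm _ _
      nlinarith [abs_nonneg (t - ω)]
    calc |f ω - g ω| = |(f ω - f t) + (f t - g t) + (g t - g ω)| := by ring_nf
      _ ≤ |f ω - f t| + |f t - g t| + |g t - g ω| := by
          exact (abs_add_le _ _).trans (by gcongr; exact abs_add_le _ _)
      _ ≤ ℓf * Δ + ε + ℓg * Δ := by linarith
      _ = B := by rw [hB]; ring
  have hBnn : 0 ≤ B := by positivity
  -- continuity / integrability
  have lipf : ContinuousOn f (Set.Icc (-Real.pi) Real.pi) := by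
    have : LipschitzOnWith (Real.toNNReal ℓf) f (Set.Icc (-Real.pi) Real.pi) := by
      rw [lipschitzOnWith_iff_dist_le_mul]
      intro x hx y hy
      simpa [Real.dist_eq, Real.coe_toNNReal ℓf hℓf] using hf x hx y hy
    exact this.continuousOn
  have lipg : ContinuousOn g (Set.Icc (-Real.pi) Real.pi) := by
    have : LipschitzOnWith (Real.toNNReal ℓg) g (Set.Icc (-Real.pi) Real.pi) := by
      rw [lipschitzOnWith_iff_dist_le_mul]
      intro x hx y hy
      simpa [Real.dist_eq, Real.coe_toNNReal ℓg hℓg] using hg x hx y hy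
    exact this.continuousOn
  have huIcc : Set.uIcc (-Real.pi) Real.pi = Set.Icc (-Real.pi) Real.pi :=
    Set.uIcc_of_le hle
  have hint : ∀ (h : ℝ → ℝ), ContinuousOn h (Set.Icc (-Real.pi) Real.pi) → ∀ k : ℤ,
      IntervalIntegrable (fun ω => (h ω : ℂ) * Complex.exp (Complex.I * (ω : ℂ) * (k : ℂ)))
        MeasureTheory.volume (-Real.pi) Real.pi := by
    intro h hc k
    apply ContinuousOn.intervalIntegrable
    rw [huIcc]
    exact (Complex.continuous_ofReal.comp_continuousOn hc).mul
      ((Complex.continuous_exp.comp (by continuity)).continuousOn)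
  -- main bound
  have main : ∀ k : ℤ, ‖rg k - rf k‖ ≤ B := by
    intro k
    rw [hrg, hrf, ← mul_sub,
      ← intervalIntegral.integral_sub (hint g lipg k) (hint f lipf k)]
    rw [norm_mul]
    have hnorm1 : ‖(1 / (2 * (Real.pi : ℂ)))‖ = 1 / (2 * Real.pi) := by
      rw [norm_div, norm_one]
      norm_num [Complex.norm_real, abs_of_pos hpi]
    rw [hnorm1]
    have hib : ‖∫ ω in (-Real.pi)..Real.pi,
        ((g ω : ℂ) * Complex.exp (Complex.I * (ω : ℂ) * (k : ℂ)) -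
         (f ω : ℂ) * Complex.exp (Complex.I * (ω : ℂ) * (k : ℂ)))‖ ≤ B * (2 * Real.pi) := by
      have := intervalIntegral.norm_integral_le_of_norm_le_const (C := B)
        (f := fun ω => (g ω : ℂ) * Complex.exp (Complex.I * (ω : ℂ) * (k : ℂ)) -
          (f ω : ℂ) * Complex.exp (Complex.I * (ω : ℂ) * (k : ℂ)))
        (a := -Real.pi) (b := Real.pi) ?_
      · have h2 : |Real.pi - -Real.pi| = 2 * Real.pi := by
          rw [abs_of_pos (by linarith)]; ring
        rw [h2] at this; linarith
      · intro ω hω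
        beta_reduce
        have hω' : ω ∈ Set.Icc (-Real.pi) Real.pi := by
          rw [Set.uIoc_of_le hle] at hω
          exact ⟨le_of_lt hω.1, hω.2⟩
        rw [← sub_mul, norm_mul]
        have hexp : ‖Complex.exp (Complex.I * (ω : ℂ) * (k : ℂ))‖ = 1 := by
          have : Complex.I * (ω : ℂ) * (k : ℂ) = ((ω * k : ℝ) : ℂ) * Complex.I := by
            push_cast; ring
          rw [this]
          exact Complex.norm_exp_ofReal_mul_I (ω * k)
        rw [hexp, mul_one]
        have : ((g ω : ℂ) - (f ω : ℂ)) = ((g ω - f ω : ℝ) : ℂ) := by push_cast; ring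
        rw [this, Complex.norm_real]
        rw [Real.norm_eq_abs, abs_sub_comm]
        exact key ω hω'
    calc (1 / (2 * Real.pi)) * ‖_‖ ≤ (1 / (2 * Real.pi)) * (B * (2 * Real.pi)) := by
          gcongr
      _ = B := by field_simp
  constructor
  · intro K k _; exact main k
  · intro hεpos K k _
    have : (1 + (ℓf + ℓg) * Δ / ε) * ε = B := by
      rw [hB]; field_simp
    rw [this]; exact main k
end

section
/- Let M be a positive integer, let x, s : Fin M → ℂ, and for j ∈ Fin M define F_x(j) = Σ_{n=0}^{M−1} x(n)·exp(−2πi·j·n/M) and F_s(j) = Σ_{n=0}^{M−1} s(n)·exp(−2πi·j·n/M). Let φ : Fin M → [−π, π] be a map of the frequency indices into [−π, π] such that every point of [−π, π] lies within distance Δ ≥ 0 of some φ(j). Let f, g : ℝ → ℝ be Lipschitz on [−π, π] with constants ℓ_f and ℓ_g, satisfying f(φ(j)) = (1/M)·|F_x(j)|² and g(φ(j)) = (1/M)·|F_s(j)|² for all j ∈ Fin M. Suppose there exist δ ≥ 0 and K ≥ 0 such that for every j ∈ Fin M, ||F_x(j)| − |F_s(j)|| ≤ δ, |F_x(j)| ≤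 K and |F_s(j)| ≤ K. Then for every integer k, |(1/(2π))·∫_{−π}^{π} (g(ω) − f(ω))·exp(i·ω·k) dω| ≤ (2K/M)·δ + (ℓ_f + ℓ_g)·Δ. -/
/-- The discrete Fourier transform of a length-`M` complex sequence:
`F_x(j) = ∑_{n=0}^{M-1} x(n)·exp(-2πi·j·n/M)`. -/
noncomputable def dft (M : ℕ) (x : Fin M → ℂ) (j : Fin M) : ℂ :=
  ∑ n : Fin M, x n * Complex.exp (-2 * Real.pi * Complex.I * (j : ℕ) * (n : ℕ) / (M : ℕ))

/-- Full deterministic chain of the proof of Theorem 1 (Steps 1–4): if the DFT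
magnitudes of the sequences `x` and `s` are uniformly `δ`-close and bounded by `K`,
the frequency indices are mapped by `φ` into a `Δ`-net of `[-π, π]`, and `f`, `g`
are Lipschitz power spectral densities on `[-π, π]` interpolating the periodograms
of `x` and `s` at the points `φ(j)`, then the autocorrelations of `f` and `g`
differ by at most `(2K/M)·δ + (ℓf + ℓg)·Δ` at every integer lag `k`. -/
theorem acf_close_of_dft_close (M : ℕ) (hM : 0 < M) (x s : Fin M → ℂ)
    (φ : Fin M → ℝ) (hφ : ∀ j : Fin M, φ j ∈ Set.Icc (-Real.pi) Real.pi)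
    (Δ : ℝ) (hΔ : 0 ≤ Δ)
    (hcover : ∀ ω ∈ Set.Icc (-Real.pi) Real.pi, ∃ j : Fin M, |ω - φ j| ≤ Δ)
    (f g : ℝ → ℝ) (ℓf ℓg : ℝ)
    (hf : ∀ a ∈ Set.Icc (-Real.pi) Real.pi, ∀ b ∈ Set.Icc (-Real.pi) Real.pi,
      |f a - f b| ≤ ℓf * |a - b|)
    (hg : ∀ a ∈ Set.Icc (-Real.pi) Real.pi, ∀ b ∈ Set.Icc (-Real.pi) Real.pi,
      |g a - g b| ≤ ℓg * |a - b|)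
    (hfφ : ∀ j : Fin M, f (φ j) = (1 / (M : ℝ)) * (‖dft M x j‖) ^ 2)
    (hgφ : ∀ j : Fin M, g (φ j) = (1 / (M : ℝ)) * (‖dft M s j‖) ^ 2)
    (δ K : ℝ) (hδ : 0 ≤ δ) (hK : 0 ≤ K)
    (hclose : ∀ j : Fin M, |‖dft M x j‖ - ‖dft M s j‖| ≤ δ)
    (hbx : ∀ j : Fin M, ‖dft M x j‖ ≤ K)
    (hbs : ∀ j : Fin M, ‖dft M s j‖ ≤ K) :
    ∀ k : ℤ,
      ‖(1 / (2 * (Real.pi : ℂ))) *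
          ∫ ω in (-Real.pi)..Real.pi,
            ((g ω - f ω : ℝ) : ℂ) * Complex.exp (Complex.I * (ω : ℂ) * (k : ℂ))‖
        ≤ (2 * K / (M : ℝ)) * δ + (ℓf + ℓg) * Δ := by

  intro k
  have hπ := Real.pi_pos
  set B : ℝ := (2 * K / (M : ℝ)) * δ + (ℓf + ℓg) * Δ with hB
  have hℓf : 0 ≤ ℓf := by
    have h := hf Real.pi ⟨by linarith, le_refl _⟩ (-Real.pi) ⟨le_refl _, by linarith⟩
    have h2 : |Real.pi - -Real.pi| = 2 * Real.pi := by rw [abs_of_pos] <;> linarith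
    rw [h2] at h
    nlinarith [abs_nonneg (f Real.pi - f (-Real.pi))]
  have hℓg : 0 ≤ ℓg := by
    have h := hg Real.pi ⟨by linarith, le_refl _⟩ (-Real.pi) ⟨le_refl _, by linarith⟩
    have h2 : |Real.pi - -Real.pi| = 2 * Real.pi := by rw [abs_of_pos] <;> linarith
    rw [h2] at h
    nlinarith [abs_nonneg (g Real.pi - g (-Real.pi))]
  have hM' : (0:ℝ) < (M:ℝ) := by exact_mod_cast hM
  have key : ∀ ω ∈ Set.Icc (-Real.pi) Real.pi, |g ω - f ω| ≤ B := by
    intro ω hω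
    obtain ⟨j, hj⟩ := hcover ω hω
    have h1 := hf ω hω (φ j) (hφ j)
    have h2 := hg ω hω (φ j) (hφ j)
    have h1' : |f ω - f (φ j)| ≤ ℓf * Δ :=
      h1.trans (mul_le_mul_of_nonneg_left hj hℓf)
    have h2' : |g ω - g (φ j)| ≤ ℓg * Δ :=
      h2.trans (mul_le_mul_of_nonneg_left hj hℓg)
    have h3 : |g (φ j) - f (φ j)| ≤ 2 * K / (M:ℝ) * δ := by
      rw [hfφ j, hgφ j, ← mul_sub, abs_mul,
        abs_of_pos (by positivity : (0:ℝ) < 1/(M:ℝ))]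
      set a := ‖dft M x j‖ with ha
      set b := ‖dft M s j‖ with hb
      have han : 0 ≤ a := norm_nonneg _
      have hbn : 0 ≤ b := norm_nonneg _
      have hc := hclose j
      have hx := hbx j
      have hs := hbs j
      rw [abs_le] at hc
      have habs : |b ^ 2 - a ^ 2| ≤ 2 * K * δ := by
        rw [abs_le]; constructor <;> nlinarith
      calc 1 / (M:ℝ) * |b ^ 2 - a ^ 2| ≤ 1 / (M:ℝ) * (2 * K * δ) := by
            apply mul_le_mul_of_nonneg_left habs; positivity
        _ = 2 * K / (M:ℝ) * δ := by ring
    have t1 : |g ω - f ω| ≤ |g ω - g (φ j)| + |g (φ j) - f ω| := abs_sub_le _ _ _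
    have t2 : |g (φ j) - f ω| ≤ |g (φ j) - f (φ j)| + |f (φ j) - f ω| := abs_sub_le _ _ _
    have t3 : |f (φ j) - f ω| = |f ω - f (φ j)| := abs_sub_comm _ _
    rw [hB]; linarith
  have hnorm : ∀ ω ∈ Set.uIoc (-Real.pi) Real.pi,
      ‖((g ω - f ω : ℝ) : ℂ) * Complex.exp (Complex.I * (ω : ℂ) * (k : ℂ))‖ ≤ B := by
    intro ω hω
    rw [Set.uIoc_of_le (by linarith : -Real.pi ≤ Real.pi)] at hω
    have hω' : ω ∈ Set.Icc (-Real.pi) Real.pi := Set.Ioc_subset_Icc_self hω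
    have he : Complex.I * (ω : ℂ) * (k : ℂ) = ((ω * (k:ℝ) : ℝ) : ℂ) * Complex.I := by
      push_cast; ring
    rw [norm_mul, Complex.norm_real, he]
    have : ‖(Complex.exp (((ω * (k:ℝ) : ℝ) : ℂ) * Complex.I))‖ = 1 :=
      Complex.norm_exp_ofReal_mul_I _
    rw [show ‖Complex.exp (((ω * (k:ℝ) : ℝ) : ℂ) * Complex.I)‖ =
        ‖(Complex.exp (((ω * (k:ℝ) : ℝ) : ℂ) * Complex.I))‖ from rfl, this,
      mul_one]
    exact key ω hω'
  have hI := intervalIntegral.norm_integral_le_of_norm_le_const hnorm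
  have habs2 : |Real.pi - -Real.pi| = 2 * Real.pi := by rw [abs_of_pos] <;> linarith
  rw [habs2] at hI
  rw [norm_mul]
  have hc : ‖(1 / (2 * (Real.pi : ℂ)))‖ = 1 / (2 * Real.pi) := by
    rw [norm_div, norm_mul, norm_one, Complex.norm_two, Complex.norm_real, Real.norm_eq_abs,
      abs_of_pos hπ]
  rw [hc]
  calc 1 / (2 * Real.pi) * ‖(∫ ω in (-Real.pi)..Real.pi,
        ((g ω - f ω : ℝ) : ℂ) * Complex.exp (Complex.I * (ω : ℂ) * (k : ℂ)))‖
      ≤ 1 / (2 * Real.pi) * (B * (2 * Real.pi)) := by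
        apply mul_le_mul_of_nonneg_left hI; positivity
    _ = B := by field_simp
end
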